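/- Let F ⊆ ℝ^d be a nonempty compact convex set and let B(v, r) be a closed ball containing F such that v ∉ F. Then there exists a closed ball of radius strictly less than r containing F. -/

import Mathlib

theorem stmt_11 (d : ℕ) (F : Set (EuclideanSpace ℝ (Fin d)))
    (hne : F.Nonempty) (hcpt : IsCompact F) (hconv : Convex ℝ F)
    (v : EuclideanSpace ℝ (Fin d)) (r : ℝ)
    (hsub : F ⊆ Metric.closedBall v r) (hv : v ∉ F) :
    ∃ (v' : EuclideanSpace ℝ (Fin d)) (r' : ℝ),
      r' < r ∧ F ⊆ Metric.closedBall v' r' := by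
  -- minimizer p of distance from v
  obtain ⟨p, hpF, hmin⟩ := hcpt.exists_isMinOn hne
    ((continuous_const.sub continuous_id).norm.continuousOn :
      ContinuousOn (fun x => ‖v - x‖) F)
  haveI : Nonempty F := ⟨⟨p, hpF⟩⟩
  have hinf : ‖v - p‖ = ⨅ w : F, ‖v - w‖ := by
    apply le_antisymm
    · exact le_ciInf fun w => hmin w.2
    · exact ciInf_le ⟨0, fun _ ⟨w, h⟩ => h ▸ norm_nonneg _⟩ (⟨p, hpF⟩ : F)
  have hproj : ∀ w ∈ F, inner ℝ (v - p) (w - p) ≤ (0 : ℝ) :=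
    (norm_eq_iInf_iff_real_inner_le_zero hconv hpF).mp hinf
  set δ := ‖v - p‖ with hδ
  have hδpos : 0 < δ := by
    rw [hδ, norm_pos_iff, sub_ne_zero]
    rintro rfl; exact hv hpF
  have hδr : δ ≤ r := by
    have := hsub hpF
    rwa [Metric.mem_closedBall, dist_comm, dist_eq_norm] at this
  have hrpos : 0 < r := lt_of_lt_of_le hδpos hδr
  refine ⟨p, Real.sqrt (r ^ 2 - δ ^ 2), ?_, ?_⟩
  · have h1 : r ^ 2 - δ ^ 2 < r ^ 2 := by nlinarith
    calc Real.sqrt (r ^ 2 - δ ^ 2) < Real.sqrt (r ^ 2) :=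
          Real.sqrt_lt_sqrt (by nlinarith) h1
      _ = r := Real.sqrt_sq hrpos.le
  · intro x hx
    have hxr : ‖x - v‖ ≤ r := by
      have := hsub hx
      rwa [Metric.mem_closedBall, dist_eq_norm] at this
    have hi : inner ℝ (v - p) (x - p) ≤ (0 : ℝ) := hproj x hx
    have hexp : ‖x - p‖ ^ 2 = ‖x - v‖ ^ 2 + 2 * inner ℝ (x - v) (v - p) + δ ^ 2 := by
      have : x - p = (x - v) + (v - p) := by abel
      rw [this, hδ, @norm_add_sq_real]
    have hi2 : inner ℝ (x - v) (v - p) ≤ -δ ^ 2 := by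
      have h3 : (inner ℝ (v - p) (x - p) : ℝ) = inner ℝ (v - p) (x - v) + inner ℝ (v - p) (v - p) := by
        rw [← inner_add_right]; congr 1; abel
      have h4 : (inner ℝ (v - p) (v - p) : ℝ) = δ ^ 2 := by
        rw [hδ, real_inner_self_eq_norm_sq]
      rw [h3, h4] at hi
      have h5 : (inner ℝ (x - v) (v - p) : ℝ) = inner ℝ (v - p) (x - v) := real_inner_comm _ _
      linarith
    have hsq : ‖x - p‖ ^ 2 ≤ r ^ 2 - δ ^ 2 := by
      have hxv2 : ‖x - v‖ ^ 2 ≤ r ^ 2 := by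
        have := norm_nonneg (x - v); nlinarith
      rw [hexp]; linarith
    rw [Metric.mem_closedBall, dist_eq_norm]
    exact (Real.le_sqrt (norm_nonneg _) (by nlinarith)).mpr hsq
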